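/- Let k ≥ 1, n ≥ 3, and let H be the subgraph of D_{k,n} induced by the union of the vertex sets of any t ≥ 3 distinct copies of D_{k-1,n}. Then H is 2-connected. -/

import Mathlib

open SimpleGraph
/-- Number of vertices of `D_{k,n}`. -/
def dcellT (n : ℕ) : ℕ → ℕ
  | 0 => n
  | k+1 => dcellT n k * (dcellT n k + 1)

/-- Vertex set of `D_{k,n}`. -/
def DCellVtx (n : ℕ) : ℕ → Type
  | 0 => Fin n
  | k+1 => Fin (dcellT n k + 1) × DCellVtx n k

/-- The uid of a vertex of `D_{k,n}`. -/
def dcellUid (n : ℕ) : (k : ℕ) → DCellVtx n k → ℕ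
  | 0, a => a.val
  | k+1, a => dcellUid n k a.2 + a.1.val * dcellT n k

/-- Adjacency in `D_{k,n}`: inside a common copy of `D_{k-1,n}` use the recursive rule;
between two copies use the DCell connection rule. -/
def dcellAdj (n : ℕ) : (k : ℕ) → DCellVtx n k → DCellVtx n k → Prop
  | 0, a, b => a ≠ b
  | k+1, a, b =>
      (a.1 = b.1 ∧ dcellAdj n k a.2 b.2) ∨
      (a.1.val < b.1.val ∧ a.1.val = dcellUid n k b.2 ∧ b.1.val = dcellUid n k a.2 + 1) ∨
      (b.1.val < a.1.val ∧ b.1.val = dcellUid n k a.2 ∧ a.1.val = dcellUid n k b.2 + 1)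

/-- The `k`-dimensional data center network with `n`-port switches. -/
def DCell (n k : ℕ) : SimpleGraph (DCellVtx n k) where
  Adj := dcellAdj n k
  symm := by
    induction k with
    | zero => exact ⟨fun a b h => h.symm⟩
    | succ k ih =>
      refine ⟨?_⟩
      rintro a b (⟨h1, h2⟩ | ⟨h1, h2, h3⟩ | ⟨h1, h2, h3⟩)
      · exact Or.inl ⟨h1.symm, ih.symm _ _ h2⟩
      · exact Or.inr (Or.inr ⟨h1, h2, h3⟩)
      · exact Or.inr (Or.inl ⟨h1, h2, h3⟩)
  loopless := by
    induction k with
    | zero => exact ⟨fun a h => h rfl⟩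
    | succ k ih =>
      refine ⟨?_⟩
      rintro a (⟨h1, h2⟩ | ⟨h1, h2, h3⟩ | ⟨h1, h2, h3⟩)
      · exact ih.irrefl a.2 h2
      · omega
      · omega

/-- Two vertices of `D_{k,n}` lie in a common copy of `K_n` (level-0 cell) iff all
coordinates except the last agree. -/
def dcellSameCell (n : ℕ) : (k : ℕ) → DCellVtx n k → DCellVtx n k → Prop
  | 0, _, _ => True
  | k+1, a, b => a.1 = b.1 ∧ dcellSameCell n k a.2 b.2
/-- The (vertex) connectivity of `G`: the least size of a set of vertices whose removal
disconnects the graph or reduces it to at most one vertex. -/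
noncomputable def vertexConnectivity {V : Type*} (G : SimpleGraph V) : ℕ :=
  sInf {m | ∃ S : Set V, S.ncard = m ∧
    (¬ (G.induce (Sᶜ : Set V)).Connected ∨ (Sᶜ : Set V).Subsingleton)}

/-- The edge connectivity of `G`: the least size of a set of edges whose removal
disconnects the graph. -/
noncomputable def edgeConnectivity {V : Type*} (G : SimpleGraph V) : ℕ :=
  sInf {m | ∃ F : Set (Sym2 V), F.ncard = m ∧ ¬ (G.deleteEdges F).Connected}

/-- `G` is `k`-connected. -/
def NConnected {V : Type*} (k : ℕ) (G : SimpleGraph V) : Prop :=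
  k < Nat.card V ∧ ∀ S : Set V, S.ncard < k → (G.induce (Sᶜ : Set V)).Connected

lemma dcellT_ge (n : ℕ) : ∀ k, n ≤ dcellT n k
  | 0 => le_refl n
  | k+1 => le_trans (dcellT_ge n k) (Nat.le_mul_of_pos_right _ (Nat.succ_pos _))

lemma dcellUid_lt (n : ℕ) : ∀ k (v : DCellVtx n k), dcellUid n k v < dcellT n k
  | 0, v => v.isLt
  | k+1, v => by
    have h1 := dcellUid_lt n k v.2
    have h2 : v.1.val ≤ dcellT n k := Nat.lt_succ_iff.mp v.1.isLt
    have := Nat.add_lt_add_of_lt_of_le h1 (Nat.mul_le_mul_right (dcellT n k) h2)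
    show dcellUid n k v.2 + v.1.val * dcellT n k < dcellT n k * (dcellT n k + 1)
    nlinarith

lemma dcellUid_inj (n : ℕ) : ∀ k (a b : DCellVtx n k),
    dcellUid n k a = dcellUid n k b → a = b
  | 0, a, b, h => Fin.ext h
  | k+1, a, b, h => by
    have ha := dcellUid_lt n k a.2
    have hb := dcellUid_lt n k b.2
    have h' : dcellUid n k a.2 + a.1.val * dcellT n k
        = dcellUid n k b.2 + b.1.val * dcellT n k := h
    have hfst : a.1.val = b.1.val := by
      rcases Nat.lt_trichotomy a.1.val b.1.val with hlt | heq | hgt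
      · nlinarith
      · exact heq
      · nlinarith
    have hsnd : a.2 = b.2 := dcellUid_inj n k _ _ (by rw [hfst] at h'; omega)
    exact Prod.ext (Fin.ext hfst) hsnd

lemma dcellUid_surj (n : ℕ) (hn : 1 ≤ n) :
    ∀ k m, m < dcellT n k → ∃ v : DCellVtx n k, dcellUid n k v = m
  | 0, m, hm => ⟨(⟨m, hm⟩ : Fin n), rfl⟩
  | k+1, m, hm => by
    set t := dcellT n k with ht
    have htpos : 0 < t := lt_of_lt_of_le hn (dcellT_ge n k)
    have hr : m % t < t := Nat.mod_lt _ htpos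
    have hq : m / t < t + 1 := by
      rw [Nat.div_lt_iff_lt_mul htpos]
      calc m < t * (t+1) := hm
        _ = (t+1) * t := Nat.mul_comm _ _
    obtain ⟨w, hw⟩ := dcellUid_surj n hn k (m % t) hr
    refine ⟨((⟨m / t, hq⟩ : Fin (t+1)), w), ?_⟩
    show dcellUid n k w + (m / t) * t = m
    rw [hw, Nat.mul_comm, Nat.mod_add_div]

def linkUid {m : ℕ} (i j : Fin m) : ℕ := if i.val < j.val then j.val - 1 else j.val

lemma linkUid_ne {m : ℕ} {i j l : Fin m} (hij : i ≠ j) (hil : i ≠ l) (hjl : j ≠ l) :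
    linkUid i j ≠ linkUid i l := by
  have h1 : i.val ≠ j.val := fun h => hij (Fin.ext h)
  have h2 : i.val ≠ l.val := fun h => hil (Fin.ext h)
  have h3 : j.val ≠ l.val := fun h => hjl (Fin.ext h)
  unfold linkUid
  split_ifs <;> omega

lemma edgeExists (n : ℕ) (hn : 1 ≤ n) (k : ℕ) (i j : Fin (dcellT n k + 1)) (hij : i ≠ j) :
    ∃ wa wb : DCellVtx n k, dcellUid n k wa = linkUid i j ∧ dcellUid n k wb = linkUid j i ∧
      (DCell n (k+1)).Adj (i, wa) (j, wb) := by
  have hijv : i.val ≠ j.val := fun h => hij (Fin.ext h)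
  rcases Nat.lt_or_ge i.val j.val with hlt | hge
  · have hj1 : j.val - 1 < dcellT n k := by have := j.isLt; omega
    have hi : i.val < dcellT n k := by have := j.isLt; omega
    obtain ⟨wa, hwa⟩ := dcellUid_surj n hn k (j.val - 1) hj1
    obtain ⟨wb, hwb⟩ := dcellUid_surj n hn k i.val hi
    refine ⟨wa, wb, ?_, ?_, ?_⟩
    · rw [hwa]; unfold linkUid; rw [if_pos hlt]
    · rw [hwb]; unfold linkUid; rw [if_neg (by omega)]
    · exact Or.inr (Or.inl ⟨hlt, hwb.symm, show j.val = dcellUid n k wa + 1 by omega⟩)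
  · have hgt : j.val < i.val := by omega
    have hj : j.val < dcellT n k := by have := i.isLt; omega
    have hi1 : i.val - 1 < dcellT n k := by have := i.isLt; omega
    obtain ⟨wa, hwa⟩ := dcellUid_surj n hn k j.val hj
    obtain ⟨wb, hwb⟩ := dcellUid_surj n hn k (i.val - 1) hi1
    refine ⟨wa, wb, ?_, ?_, ?_⟩
    · rw [hwa]; unfold linkUid; rw [if_neg (by omega)]
    · rw [hwb]; unfold linkUid; rw [if_pos hgt]
    · exact Or.inr (Or.inr ⟨hgt, hwa.symm, show i.val = dcellUid n k wb + 1 by omega⟩)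

def dcellFintype (n : ℕ) : (k : ℕ) → Fintype (DCellVtx n k)
  | 0 => inferInstanceAs (Fintype (Fin n))
  | k+1 => @instFintypeProd _ _ _ (dcellFintype n k)

instance {n k : ℕ} : Fintype (DCellVtx n k) := dcellFintype n k

lemma dcellVtx_nonempty (n : ℕ) (hn : 1 ≤ n) : ∀ k, Nonempty (DCellVtx n k)
  | 0 => ⟨(⟨0, hn⟩ : Fin n)⟩
  | k+1 => ⟨((0 : Fin (dcellT n k + 1)), (dcellVtx_nonempty n hn k).some)⟩

lemma pair_fst_eq {n k : ℕ} {i j : Fin (dcellT n k + 1)} {a b : DCellVtx n k}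
    (h : ((i, a) : DCellVtx n (k+1)) = ((j, b) : DCellVtx n (k+1))) : i = j :=
  congrArg Prod.fst h

lemma pair_snd_eq {n k : ℕ} {i j : Fin (dcellT n k + 1)} {a b : DCellVtx n k}
    (h : ((i, a) : DCellVtx n (k+1)) = ((j, b) : DCellVtx n (k+1))) : a = b :=
  congrArg Prod.snd h

def PkConn (n k : ℕ) : Prop :=
  ∀ S : Set (DCellVtx n k), S.ncard ≤ 1 → ((DCell n k).induce (Sᶜ : Set _)).Connected

lemma pk_zero (n : ℕ) (hn : 3 ≤ n) : PkConn n 0 := by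
  intro S hS
  have hSsub : S.Subsingleton := by
    intro a ha b hb
    exact (Set.ncard_le_one_iff S.toFinite).mp hS ha hb
  rw [SimpleGraph.connected_iff]
  constructor
  · intro u v
    by_cases huv : u = v
    · rw [huv]
    · refine SimpleGraph.Adj.reachable ?_
      show dcellAdj n 0 u.val v.val
      exact fun h => huv (Subtype.ext h)
  · obtain ⟨w0, hw0⟩ := dcellUid_surj n (by omega) 0 0 (by show 0 < n; omega)
    obtain ⟨w1, hw1⟩ := dcellUid_surj n (by omega) 0 1 (by show 1 < n; omega)
    by_cases h0 : w0 ∈ S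
    · refine ⟨⟨w1, fun h1 => ?_⟩⟩
      have := hSsub h0 h1
      rw [this, hw1] at hw0
      exact absurd hw0 (by omega)
    · exact ⟨⟨w0, h0⟩⟩

lemma pk_step (n : ℕ) (hn : 3 ≤ n) (k : ℕ) (ih : PkConn n k)
    (I : Finset (Fin (dcellT n k + 1))) (hI : 3 ≤ I.card)
    (S : Set (DCellVtx n (k+1))) (hS : S.ncard ≤ 1) :
    ((DCell n (k+1)).induce
      (({v : DCellVtx n (k+1) | v.1 ∈ I} ∩ (Sᶜ : Set _)) : Set _)).Connected := by
  set A : Set (DCellVtx n (k+1)) := {v : DCellVtx n (k+1) | v.1 ∈ I} ∩ (Sᶜ : Set _) with hA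
  have hn1 : 1 ≤ n := by omega
  have hSsub : S.Subsingleton := fun a ha b hb =>
    (Set.ncard_le_one_iff S.toFinite).mp hS ha hb
  -- step1: reachability within a copy
  have step1 : ∀ u v : {x // x ∈ A}, (u : DCellVtx n (k+1)).1 = (v : DCellVtx n (k+1)).1 →
      ((DCell n (k+1)).induce A).Reachable u v := by
    intro u v h
    set i : Fin (dcellT n k + 1) := (u : DCellVtx n (k+1)).1 with hi
    set T : Set (DCellVtx n k) := {w | ((i, w) : DCellVtx n (k+1)) ∈ S} with hT
    have hTinj : Function.Injective (fun w : DCellVtx n k => ((i, w) : DCellVtx n (k+1))) :=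
      fun a b hab => congrArg Prod.snd hab
    have hTcard : T.ncard ≤ 1 := by
      have himg : (fun w : DCellVtx n k => ((i, w) : DCellVtx n (k+1))) '' T ⊆ S := by
        rintro x ⟨w, hw, rfl⟩; exact hw
      calc T.ncard = ((fun w : DCellVtx n k => ((i, w) : DCellVtx n (k+1))) '' T).ncard :=
            (Set.ncard_image_of_injective T hTinj).symm
        _ ≤ S.ncard := Set.ncard_le_ncard himg S.toFinite
        _ ≤ 1 := hS
    have hconn := ih T hTcard
    have huI : (u : DCellVtx n (k+1)).1 ∈ I := u.prop.1
    let f : (DCell n k).induce (Tᶜ : Set _) →g (DCell n (k+1)).induce A :=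
      ⟨fun w => ⟨(i, w.val), ⟨huI, w.prop⟩⟩, fun hab => Or.inl ⟨rfl, hab⟩⟩
    have hu2 : (u : DCellVtx n (k+1)).2 ∈ (Tᶜ : Set _) := u.prop.2
    have hv2 : (v : DCellVtx n (k+1)).2 ∈ (Tᶜ : Set _) := by
      show ((i, (v : DCellVtx n (k+1)).2) : DCellVtx n (k+1)) ∉ S
      rw [h]
      exact v.prop.2
    have hr := (hconn.preconnected ⟨(u : DCellVtx n (k+1)).2, hu2⟩
      ⟨(v : DCellVtx n (k+1)).2, hv2⟩).map f
    have e1 : f ⟨(u : DCellVtx n (k+1)).2, hu2⟩ = u := Subtype.ext rfl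
    have e2 : f ⟨(v : DCellVtx n (k+1)).2, hv2⟩ = v := Subtype.ext (by
      show ((i, (v : DCellVtx n (k+1)).2) : DCellVtx n (k+1)) = (v : DCellVtx n (k+1))
      rw [h]
      rfl)
    rwa [e1, e2] at hr
  -- key: hop across copies
  have key : ∀ u v : {x // x ∈ A}, (u : DCellVtx n (k+1)).1 ≠ (v : DCellVtx n (k+1)).1 →
      (∃ wa wb : DCellVtx n k,
        (DCell n (k+1)).Adj ((u : DCellVtx n (k+1)).1, wa) ((v : DCellVtx n (k+1)).1, wb) ∧
        (((u : DCellVtx n (k+1)).1, wa) : DCellVtx n (k+1)) ∉ S ∧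
        (((v : DCellVtx n (k+1)).1, wb) : DCellVtx n (k+1)) ∉ S) →
      ((DCell n (k+1)).induce A).Reachable u v := by
    rintro u v hne ⟨wa, wb, hadj, hwaS, hwbS⟩
    have ha : (((u : DCellVtx n (k+1)).1, wa) : DCellVtx n (k+1)) ∈ A := ⟨u.prop.1, hwaS⟩
    have hb : (((v : DCellVtx n (k+1)).1, wb) : DCellVtx n (k+1)) ∈ A := ⟨v.prop.1, hwbS⟩
    refine ((step1 u ⟨_, ha⟩ rfl).trans (SimpleGraph.Adj.reachable ?_)).trans
      (step1 ⟨_, hb⟩ v rfl)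
    exact hadj
  rw [SimpleGraph.connected_iff]
  constructor
  · intro u v
    by_cases hfst : (u : DCellVtx n (k+1)).1 = (v : DCellVtx n (k+1)).1
    · exact step1 u v hfst
    · obtain ⟨wa, wb, hwa, hwb, hadj⟩ :=
        edgeExists n hn1 k (u : DCellVtx n (k+1)).1 (v : DCellVtx n (k+1)).1 hfst
      by_cases hblock : (((u : DCellVtx n (k+1)).1, wa) : DCellVtx n (k+1)) ∈ S ∨
          (((v : DCellVtx n (k+1)).1, wb) : DCellVtx n (k+1)) ∈ S
      · -- blocked: route via third copy
        obtain ⟨l, hl⟩ : ∃ l, l ∈ I \ ({(u : DCellVtx n (k+1)).1,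
            (v : DCellVtx n (k+1)).1} : Finset _) := by
          have h2 : ({(u : DCellVtx n (k+1)).1, (v : DCellVtx n (k+1)).1} : Finset _).card ≤ 2 :=
            (Finset.card_insert_le _ _).trans (by simp)
          have h3 := Finset.le_card_sdiff ({(u : DCellVtx n (k+1)).1,
            (v : DCellVtx n (k+1)).1} : Finset _) I
          have h4 : 0 < (I \ ({(u : DCellVtx n (k+1)).1,
            (v : DCellVtx n (k+1)).1} : Finset _)).card := by omega
          exact Finset.card_pos.mp h4
        rw [Finset.mem_sdiff, Finset.mem_insert, Finset.mem_singleton] at hl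
        push_neg at hl
        obtain ⟨hlI, hli, hlj⟩ := hl
        obtain ⟨wa1, wb1, hwa1, hwb1, hadj1⟩ :=
          edgeExists n hn1 k (u : DCellVtx n (k+1)).1 l (fun h => hli h.symm)
        obtain ⟨wa2, wb2, hwa2, hwb2, hadj2⟩ :=
          edgeExists n hn1 k l (v : DCellVtx n (k+1)).1 (fun h => hlj h)
        -- the unique removed vertex
        obtain ⟨s, hsS⟩ : ∃ s, S = {s} := by
          rcases (Set.ncard_le_one_iff_eq S.toFinite).mp hS with h | h
          · rw [h] at hblock; rcases hblock with hb | hb <;> exact absurd hb (Set.notMem_empty _)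
          · exact h
        rw [hsS] at hblock
        have hscase : s = (((u : DCellVtx n (k+1)).1, wa) : DCellVtx n (k+1)) ∨
            s = (((v : DCellVtx n (k+1)).1, wb) : DCellVtx n (k+1)) := by
          rcases hblock with h | h
          · exact Or.inl (Set.mem_singleton_iff.mp h).symm
          · exact Or.inr (Set.mem_singleton_iff.mp h).symm
        have n1 : (((u : DCellVtx n (k+1)).1, wa1) : DCellVtx n (k+1)) ∉ S := by
          rw [hsS]; intro hm
          have hm' := (Set.mem_singleton_iff.mp hm)
          rcases hscase with h | h
          · rw [h] at hm'
            have : wa1 = wa := pair_snd_eq hm'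
            rw [this, hwa] at hwa1
            exact linkUid_ne hfst (fun hh => hli hh.symm) (fun hh => hlj hh.symm) hwa1
          · rw [h] at hm'
            exact hfst (pair_fst_eq hm')
        have n2 : ((l, wb1) : DCellVtx n (k+1)) ∉ S := by
          rw [hsS]; intro hm
          have hm' := Set.mem_singleton_iff.mp hm
          rcases hscase with h | h
          · rw [h] at hm'; exact hli (pair_fst_eq hm')
          · rw [h] at hm'; exact hlj (pair_fst_eq hm')
        have n3 : ((l, wa2) : DCellVtx n (k+1)) ∉ S := by
          rw [hsS]; intro hm
          have hm' := Set.mem_singleton_iff.mp hm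
          rcases hscase with h | h
          · rw [h] at hm'; exact hli (pair_fst_eq hm')
          · rw [h] at hm'; exact hlj (pair_fst_eq hm')
        have n4 : (((v : DCellVtx n (k+1)).1, wb2) : DCellVtx n (k+1)) ∉ S := by
          rw [hsS]; intro hm
          have hm' := Set.mem_singleton_iff.mp hm
          rcases hscase with h | h
          · rw [h] at hm'; exact hfst ((pair_fst_eq hm').symm)
          · rw [h] at hm'
            have : wb2 = wb := pair_snd_eq hm'
            rw [this, hwb] at hwb2
            exact linkUid_ne (fun hh => hfst hh.symm) (fun hh => hlj hh.symm)
              (fun hh => hli hh.symm) hwb2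
        have hm1 : ((l, wb1) : DCellVtx n (k+1)) ∈ A := ⟨hlI, n2⟩
        refine (key u ⟨_, hm1⟩ (fun h => hli h.symm) ⟨wa1, wb1, hadj1, n1, n2⟩).trans
          (key ⟨_, hm1⟩ v (fun h => hlj h) ⟨wa2, wb2, hadj2, n3, n4⟩)
      · push_neg at hblock
        exact key u v hfst ⟨wa, wb, hadj, hblock.1, hblock.2⟩
  · -- nonempty
    obtain ⟨i0, hi0⟩ : ∃ i0, i0 ∈ I := Finset.card_pos.mp (by omega) |>.exists_mem
    obtain ⟨w0, hw0⟩ := dcellUid_surj n hn1 k 0 (by have := dcellT_ge n k; omega)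
    obtain ⟨w1, hw1⟩ := dcellUid_surj n hn1 k 1 (by have := dcellT_ge n k; omega)
    by_cases h0 : ((i0, w0) : DCellVtx n (k+1)) ∈ S
    · refine ⟨⟨(i0, w1), hi0, fun h1 => ?_⟩⟩
      have := hSsub h0 h1
      have : w0 = w1 := pair_snd_eq this
      rw [this, hw1] at hw0
      exact absurd hw0 (by omega)
    · exact ⟨⟨(i0, w0), hi0, h0⟩⟩

lemma pk_all (n : ℕ) (hn : 3 ≤ n) : ∀ k, PkConn n k
  | 0 => pk_zero n hn
  | k+1 => by
    intro S hS
    have hcard : 3 ≤ (Finset.univ : Finset (Fin (dcellT n k + 1))).card := by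
      rw [Finset.card_univ, Fintype.card_fin]
      have := dcellT_ge n k; omega
    have h := pk_step n hn k (pk_all n hn k) Finset.univ hcard S hS
    have hset : ({v : DCellVtx n (k+1) | v.1 ∈ (Finset.univ : Finset (Fin (dcellT n k + 1)))}
        ∩ (Sᶜ : Set _)) = (Sᶜ : Set _) := by
      ext v; simp
    rwa [hset] at h

theorem stmt6' (n k : ℕ) (hn : 3 ≤ n) (I : Finset (Fin (dcellT n k + 1)))
    (hI : 3 ≤ I.card) :
    (2 < Nat.card {v : DCellVtx n (k + 1) // v ∈ {v : DCellVtx n (k + 1) | v.1 ∈ I}}) := by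
  have hn1 : 1 ≤ n := by omega
  obtain ⟨i0, hi0⟩ : ∃ i0, i0 ∈ I := Finset.card_pos.mp (by omega) |>.exists_mem
  obtain ⟨w0, hw0⟩ := dcellUid_surj n hn1 k 0 (by have := dcellT_ge n k; omega)
  obtain ⟨w1, hw1⟩ := dcellUid_surj n hn1 k 1 (by have := dcellT_ge n k; omega)
  obtain ⟨w2, hw2⟩ := dcellUid_surj n hn1 k 2 (by have := dcellT_ge n k; omega)
  set f : Fin 3 → {v : DCellVtx n (k + 1) // v ∈ {v : DCellVtx n (k + 1) | v.1 ∈ I}} :=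
    fun m => ⟨(i0, ![w0, w1, w2] m), hi0⟩ with hf
  have hg : ∀ m : Fin 3, dcellUid n k (![w0, w1, w2] m) = m.val := by
    intro m
    fin_cases m <;> simpa
  have hinj : Function.Injective f := by
    intro a b hab
    have h2 : ![w0, w1, w2] a = ![w0, w1, w2] b :=
      pair_snd_eq (congrArg Subtype.val hab)
    have h3 := congrArg (dcellUid n k) h2
    rw [hg, hg] at h3
    exact Fin.ext h3
  calc 2 < 3 := by omega
    _ = Nat.card (Fin 3) := by simp
    _ ≤ _ := Nat.card_le_card_of_injective f hinj

/-- The subgraph of `D_{k,n}` (`k ≥ 1`, `n ≥ 3`) induced by the union of at least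
three distinct copies of `D_{k-1,n}` is 2-connected. -/
theorem stmt6 (n k : ℕ) (hn : 3 ≤ n) (I : Finset (Fin (dcellT n k + 1)))
    (hI : 3 ≤ I.card) :
    NConnected 2 ((DCell n (k + 1)).induce {v : DCellVtx n (k + 1) | v.1 ∈ I}) := by
  constructor
  · exact stmt6' n k hn I hI
  · intro S hS
    set S' : Set (DCellVtx n (k+1)) := Subtype.val '' S with hS'def
    have hS1 : S'.ncard ≤ 1 := by
      rw [hS'def, Set.ncard_image_of_injective S Subtype.val_injective]
      omega
    have h := pk_step n hn k (pk_all n hn k) I hI S' hS1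
    let e : (((DCell n (k + 1)).induce {v : DCellVtx n (k + 1) | v.1 ∈ I}).induce
          (Sᶜ : Set _)) ≃g
        ((DCell n (k+1)).induce (({v : DCellVtx n (k+1) | v.1 ∈ I} ∩ (S'ᶜ : Set _)) : Set _)) :=
      ⟨⟨fun x => ⟨x.val.val, ⟨x.val.prop, fun hm => by
          obtain ⟨y, hyS, hy⟩ := hm
          exact x.prop (by rwa [show y = x.val from Subtype.ext hy] at hyS)⟩⟩,
        fun y => ⟨⟨y.val, y.prop.1⟩, fun hm => y.prop.2 ⟨⟨y.val, y.prop.1⟩, hm, rfl⟩⟩,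
        fun x => Subtype.ext (Subtype.ext rfl),
        fun y => Subtype.ext rfl⟩, Iff.rfl⟩
    exact e.connected_iff.mpr h
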